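/- arXiv:1511.01073 — 2 statements merged into one kernel-verified Lean document; each statement's English description precedes it below -/
import Mathlib

section
/- Let Λ be the 1-graph with vertices {v_n : n ∈ ℕ}, two edges f, g from v_1 to v_0, and a single edge e_n from v_{n+1} to v_n for each n ≥ 1. Then the first categorical cohomology group H^1(Λ, Z) with constant coefficients Z is isomorphic to Z, generated by the cocycle c with c(λ) = 1 if λ = f e_1 ··· e_ℓ for some ℓ, and c(λ) = 0 otherwise. In particular, the cocycle c with c(f) = 1, c(g) = 0 is not a coboundary: there is no function b : Λ^0 → Z with c(λ) = b(r(λ)) − b(s(λ)) for all λ. -/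
open CategoryTheory

/-- The edges of the `1`-graph `Λ`: vertices are `ℕ` (vertex `n` is `vₙ`), with two
edges `f, g` from `v₁` to `v₀` and a single edge `eₙ` from `v_{n+1}` to `vₙ` for each
`n ≥ 1` (`Edge.e n` is the edge `e_{n+1} : v_{n+2} → v_{n+1}`).  An edge from `a` to
`b` is a quiver arrow `a ⟶ b` (sources are domains). -/
inductive Edge : ℕ → ℕ → Type
  | f : Edge 1 0
  | g : Edge 1 0
  | e (n : ℕ) : Edge (n + 2) (n + 1)

instance : Quiver ℕ := ⟨Edge⟩

/-- The `1`-cocycle on the path category `Λ` counting occurrences of the edge `f`: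
`cF(λ) = 1` if `λ = f e₁ ⋯ e_ℓ` for some `ℓ` (i.e. `λ` passes through `f`), and
`cF(λ) = 0` otherwise. -/
def cF : ∀ {a b : ℕ}, Quiver.Path a b → ℤ
  | _, _, .nil => 0
  | _, _, .cons p ed => cF p + (match ed with | .f => 1 | .g => 0 | .e _ => 0)


def pathTo0 : ∀ n : ℕ, Quiver.Path n 0
  | 0 => .nil
  | 1 => .cons .nil Edge.g
  | (n + 2) => (Quiver.Path.cons .nil (Edge.e n)).comp (pathTo0 (n + 1))

/-- For the `1`-graph `Λ` above, `H¹(Λ, ℤ) ≅ ℤ`, generated by the cocycle `cF`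
(which takes the value `1` exactly on the paths `f e₁ ⋯ e_ℓ`); in particular the
cocycle with `c(f) = 1`, `c(g) = 0` is not a coboundary. -/
theorem stmt_17 :
    -- `cF` is a `1`-cocycle (an additive function on paths) with `cF(f) = 1`,
    -- `cF(g) = 0`, `cF(eₙ) = 0`
    (∀ {a b c : ℕ} (p : Quiver.Path a b) (q : Quiver.Path b c),
        cF (p.comp q) = cF p + cF q) ∧
    cF (Quiver.Path.nil.cons (Edge.f : (1 : ℕ) ⟶ 0)) = 1 ∧
    cF (Quiver.Path.nil.cons (Edge.g : (1 : ℕ) ⟶ 0)) = 0 ∧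
    (∀ n : ℕ, cF (Quiver.Path.nil.cons (Edge.e n : (n + 2 : ℕ) ⟶ (n + 1))) = 0) ∧
    -- every `ℤ`-valued `1`-cocycle is cohomologous to a unique multiple of `cF`,
    -- i.e. `H¹(Λ, ℤ) ≅ ℤ` with generator `[cF]`
    (∀ c : ∀ a b : ℕ, Quiver.Path a b → ℤ,
        (∀ (a b e : ℕ) (p : Quiver.Path a b) (q : Quiver.Path b e),
            c a e (p.comp q) = c a b p + c b e q) →
        ∃ (m : ℤ) (β : ℕ → ℤ), ∀ (a b : ℕ) (p : Quiver.Path a b),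
          c a b p = m * cF p + (β b - β a)) ∧
    (∀ m : ℤ, (∃ β : ℕ → ℤ, ∀ (a b : ℕ) (p : Quiver.Path a b), m * cF p = β b - β a)
        → m = 0) ∧
    -- in particular, `cF` is not a coboundary: there is no `b : Λ⁰ → ℤ` with
    -- `cF(λ) = b(r(λ)) - b(s(λ))`
    ¬ ∃ β : ℕ → ℤ, ∀ (a b : ℕ) (p : Quiver.Path a b), cF p = β b - β a := by
  have hadd : ∀ {a b c : ℕ} (p : Quiver.Path a b) (q : Quiver.Path b c),
      cF (p.comp q) = cF p + cF q := by
    intro a b c p q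
    induction q with
    | nil => simp [cF]
    | cons q ed ih =>
      change Edge _ _ at ed
      set_option linter.unnecessarySeqFocus false in
      cases ed <;> simp [cF, Quiver.Path.comp, ih] <;> ring
  refine ⟨hadd, by simp [cF], by simp [cF], fun n => by simp [cF], ?_, ?_, ?_⟩
  · intro c hc
    have hnil : ∀ a, c a a .nil = 0 := by
      intro a
      have h := hc a a a .nil .nil
      simp only [Quiver.Path.comp_nil] at h
      linarith
    refine ⟨c 1 0 (.cons .nil .f) - c 1 0 (.cons .nil .g),
      fun n => -(c n 0 (pathTo0 n)), ?_⟩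
    intro a b p
    induction p with
    | nil => simp [cF, hnil]
    | cons p ed ih =>
      rename_i x y
      have h1 : c a y (p.cons ed) = c a x p + c x y (.cons .nil ed) :=
        hc a x y p (.cons .nil ed)
      have hedge : c x y (Quiver.Path.cons .nil ed) =
          (c 1 0 (.cons .nil .f) - c 1 0 (.cons .nil .g)) *
            cF (Quiver.Path.cons (Quiver.Path.nil) ed) +
          (-(c y 0 (pathTo0 y)) - -(c x 0 (pathTo0 x))) := by
        change Edge _ _ at ed
        cases ed with
        | f =>
          have h0 := hnil 0
          simp only [cF, pathTo0]
          linarith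
        | g =>
          have h0 := hnil 0
          simp only [cF, pathTo0]
          linarith
        | e n =>
          have h2 : c (n+2) 0 (pathTo0 (n+2)) =
              c (n+2) (n+1) (.cons .nil (.e n)) + c (n+1) 0 (pathTo0 (n+1)) :=
            hc (n+2) (n+1) 0 (.cons .nil (.e n)) (pathTo0 (n+1))
          simp only [cF]
          linarith
      have h3 : cF (p.cons ed) = cF p + cF (Quiver.Path.cons .nil ed) :=
        hadd p (.cons .nil ed)
      rw [h1, h3, ih, hedge]; ring
  · rintro m ⟨β, hβ⟩
    have hf := hβ 1 0 (.cons .nil .f)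
    have hg := hβ 1 0 (.cons .nil .g)
    simp [cF] at hf hg
    linarith
  · rintro ⟨β, hβ⟩
    have hf := hβ 1 0 (.cons .nil .f)
    have hg := hβ 1 0 (.cons .nil .g)
    simp [cF] at hf hg
    linarith
end

section
/- With Λ the 1-graph of the previous statement (two parallel edges f, g from v_1 to v_0 and a single chain of edges e_n below), every Z-valued continuous 1-cocycle on the path groupoid G_Λ is a coboundary: for any additive function c : G_Λ → Z there exists b : Λ^∞ → Z with c(x, m, y) = b(x) − b(y) for all (x,m,y) ∈ G_Λ. Hence H^1(G_Λ, Z) = 0 while H^1(Λ, Z) ≅ Z, so the natural map H^1(Λ, Z) → H^1_c(G_Λ, Z) is not injective. -/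
open CategoryTheory

/-- The infinite path space `Λ^∞` of the `1`-graph above: the two paths `x₊, x₋` with
range `v₀` (beginning with `f`, resp. `g`), and for each `n ≥ 1` the unique infinite
path `tail (n-1)` with range `vₙ`. -/
inductive PathSpace : Type
  | plus : PathSpace
  | minus : PathSpace
  | tail (n : ℕ) : PathSpace

/-- The one-step shift `σ` on `Λ^∞`. -/
def shift1 : PathSpace → PathSpace
  | .plus => .tail 0
  | .minus => .tail 0
  | .tail n => .tail (n + 1)

/-- Membership in the path groupoid `G_Λ`: `(x, m, y) ∈ G_Λ` iff
`σʲ(x) = σˡ(y)` for some `j, ℓ ∈ ℕ` with `j - ℓ = m`.  (This reproduces exactly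
`G_Λ = {(x₊,0,x₋), (x₋,0,x₊)} ∪ {(x, n, σⁿ(x)), (σⁿ(x), -n, x)}`.) -/
def memG (x : PathSpace) (m : ℤ) (y : PathSpace) : Prop :=
  ∃ j l : ℕ, (j : ℤ) - l = m ∧ shift1^[j] x = shift1^[l] y

def ht : PathSpace → ℕ
  | .plus => 0
  | .minus => 0
  | .tail n => n + 1

def M (x : PathSpace) : ℤ :=
  match x with
  | .plus => 0
  | .minus => 0
  | .tail n => -(n + 1)

lemma shift1_iterate (x : PathSpace) (k : ℕ) :
    shift1^[k + 1] x = .tail (ht x + k) := by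
  induction k with
  | zero => cases x <;> rfl
  | succ k ih =>
      rw [Function.iterate_succ_apply', ih]
      simp [shift1, Nat.add_assoc]

def edgeVal : ∀ {a b : ℕ}, Edge a b → ℤ
  | _, _, .f => 1
  | _, _, .g => 0
  | _, _, .e _ => 0

lemma cF_cons {a b d : ℕ} (p : Quiver.Path a b) (ed : Edge b d) :
    cF (p.cons ed) = cF p + edgeVal ed := by cases ed <;> rw [cF.eq_def] <;> simp [edgeVal]

lemma memG_plus (x : PathSpace) : memG x (M x) .plus := by
  cases x with
  | plus => exact ⟨0, 0, rfl, rfl⟩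
  | minus => exact ⟨1, 1, rfl, rfl⟩
  | tail n =>
      refine ⟨0, n + 1, by simp [M], ?_⟩
      rw [shift1_iterate]
      simp [ht]

lemma memG_eq {x : PathSpace} {m : ℤ} {y : PathSpace} (h : memG x m y) :
    m = M x - M y := by
  obtain ⟨j, l, hm, he⟩ := h
  have he' : shift1^[j + 1] x = shift1^[l + 1] y := by
    rw [Function.iterate_succ_apply', Function.iterate_succ_apply', he]
  rw [shift1_iterate, shift1_iterate] at he'
  have := PathSpace.tail.inj he'
  cases x <;> cases y <;> simp [M, ht] at this ⊢ <;> omega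

/-- For the `1`-graph `Λ` with two parallel edges `f, g` and a chain of edges below,
every `ℤ`-valued `1`-cocycle on the path groupoid `G_Λ` is a coboundary
(`c(x,m,y) = b(x) - b(y)`), so `H¹(G_Λ, ℤ) = 0`; on the other hand `cF` is a
`1`-cocycle on `Λ` which is not a coboundary (and `H¹(Λ, ℤ) ≅ ℤ`), so the natural map
`H¹(Λ, ℤ) → H¹_c(G_Λ, ℤ)` is not injective. -/
theorem stmt_18 :
    -- every additive `c : G_Λ → ℤ` is a coboundary
    (∀ c : ∀ (x : PathSpace) (m : ℤ) (y : PathSpace), memG x m y → ℤ,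
        (∀ (x : PathSpace) (m : ℤ) (y : PathSpace) (m' : ℤ) (z : PathSpace)
            (h1 : memG x m y) (h2 : memG y m' z) (h3 : memG x (m + m') z),
            c x (m + m') z h3 = c x m y h1 + c y m' z h2) →
        ∃ b : PathSpace → ℤ,
          ∀ (x : PathSpace) (m : ℤ) (y : PathSpace) (h : memG x m y),
            c x m y h = b x - b y) ∧
    -- while `cF` is a `1`-cocycle on `Λ` which is not a coboundary
    (∀ {a b c : ℕ} (p : Quiver.Path a b) (q : Quiver.Path b c),
        cF (p.comp q) = cF p + cF q) ∧
    ¬ ∃ β : ℕ → ℤ, ∀ (a b : ℕ) (p : Quiver.Path a b), cF p = β b - β a := by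
  refine ⟨?_, ?_, ?_⟩
  · intro c hc
    have ccongr : ∀ (x : PathSpace) (m m' : ℤ) (y : PathSpace) (h : memG x m y)
        (h' : memG x m' y), m = m' → c x m y h = c x m' y h' := by
      intro x m m' y h h' e
      subst e; rfl
    refine ⟨fun x => c x (M x) .plus (memG_plus x), ?_⟩
    intro x m y h
    have hm := memG_eq h
    have e1 : m + M y = M x := by omega
    have key := hc x m y (M y) .plus h (memG_plus y) (e1 ▸ memG_plus x)
    rw [ccongr x (m + M y) (M x) .plus _ (memG_plus x) e1] at key
    show c x m y h = c x (M x) PathSpace.plus (memG_plus x) - c y (M y) PathSpace.plus (memG_plus y)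
    omega
  · intro a b c p q
    induction q with
    | nil => simp [cF]
    | cons q ed ih =>
        rw [Quiver.Path.comp_cons, cF_cons, cF_cons, ih]
        ring
  · rintro ⟨β, hβ⟩
    have h1 := hβ 1 0 (Quiver.Hom.toPath Edge.f)
    have h2 := hβ 1 0 (Quiver.Hom.toPath Edge.g)
    simp [cF, Quiver.Hom.toPath] at h1 h2
    omega
end
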